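/- Let 0 < |a| < 1, y = |a|/|b|, τ = 4/(πy), and for fixed k let λₙ be a sequence of complex numbers with λₙ·e^{−iφ} = 1 − i(πk)²y/(2n²) + O(n⁻³) as n → ∞ (where e^{iφ} = |a|+i|b| and τn² rounds to an integer). Then (λₙ e^{−iφ})^{⌊τn²⌋} → 1 as n → ∞. -/

import Mathlib

open Filter Real Complex

private lemma aux_pow_sub_pow (x u : ℂ) (M : ℝ) (hM : 1 ≤ M) (hx : ‖x‖ ≤ M)
    (hu : ‖u‖ ≤ M) : ∀ m : ℕ, ‖x ^ m - u ^ m‖ ≤ m * M ^ m * ‖x - u‖ := by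
  have hM0 : 0 ≤ M := le_trans zero_le_one hM
  intro m
  induction m with
  | zero => simp
  | succ m ih =>
    have key : x ^ (m + 1) - u ^ (m + 1) = x ^ m * (x - u) + (x ^ m - u ^ m) * u := by
      ring
    calc ‖x ^ (m + 1) - u ^ (m + 1)‖
        ≤ ‖x ^ m * (x - u)‖ + ‖(x ^ m - u ^ m) * u‖ := by rw [key]; exact norm_add_le _ _
      _ = ‖x‖ ^ m * ‖x - u‖ + ‖x ^ m - u ^ m‖ * ‖u‖ := by
          rw [norm_mul, norm_mul, norm_pow]
      _ ≤ M ^ m * ‖x - u‖ + (m * M ^ m * ‖x - u‖) * M := by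
          gcongr
      _ ≤ M ^ (m + 1) * ‖x - u‖ + (m * M ^ (m + 1) * ‖x - u‖) := by
          have h1 : M ^ m ≤ M ^ (m + 1) := pow_le_pow_right₀ hM (Nat.le_succ m)
          have h2 : (m * M ^ m * ‖x - u‖) * M = m * (M ^ m * M) * ‖x - u‖ := by ring
          rw [h2, ← pow_succ]
          gcongr
      _ = (↑(m + 1)) * M ^ (m + 1) * ‖x - u‖ := by push_cast; ring

/-- if `λₙ·e^{−iφ} = 1 − i(πk)²y/(2n²) + O(n⁻³)` with
`e^{iφ} = |a| + i|b|`, `y = |a|/|b|` and `τ = 4/(πy)`, then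
`(λₙ e^{−iφ})^{⌊τn²⌋} → 1` as `n → ∞`. -/
theorem stmt_15 (a b : ℂ) (ha0 : 0 < ‖a‖) (ha1 : ‖a‖ < 1)
    (hab : ‖a‖ ^ 2 + ‖b‖ ^ 2 = 1) (hb : 0 < ‖b‖)
    (y : ℝ) (hy : y = ‖a‖ / ‖b‖)
    (τ : ℝ) (hτ : τ = 4 / (π * y))
    (φ : ℝ) (hφ : Complex.exp (Complex.I * φ) = (‖a‖ : ℂ) + Complex.I * (‖b‖ : ℂ))
    (k : ℕ) (hk : 0 < k)
    (lam : ℕ → ℂ)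
    (hlam : ∃ C : ℝ, ∀ᶠ n : ℕ in atTop,
      ‖lam n * Complex.exp (-(Complex.I * φ)) -
        (1 - Complex.I * (((π * k) ^ 2 * y / (2 * (n : ℝ) ^ 2) : ℝ) : ℂ))‖
        ≤ C / (n : ℝ) ^ 3) :
    Tendsto (fun n : ℕ => (lam n * Complex.exp (-(Complex.I * φ))) ^ ⌊τ * (n : ℝ) ^ 2⌋₊)
      atTop (nhds 1) := by
  have hπ : (0:ℝ) < π := Real.pi_pos
  have hy0 : 0 < y := by rw [hy]; exact div_pos ha0 hb
  have hτ0 : 0 < τ := by rw [hτ]; positivity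
  set c : ℝ := (π * k) ^ 2 * y / 2 with hc_def
  have hc0 : 0 < c := by
    have : (0:ℝ) < (k:ℝ) := by exact_mod_cast hk
    rw [hc_def]; positivity
  set z : ℕ → ℂ := fun n => lam n * Complex.exp (-(Complex.I * φ)) with hz_def
  set u : ℕ → ℂ := fun n => Complex.exp (((-(c / (n : ℝ) ^ 2) : ℝ) : ℂ) * Complex.I)
    with hu_def
  set m : ℕ → ℕ := fun n => ⌊τ * (n : ℝ) ^ 2⌋₊ with hm_def
  -- Step A : u n ^ m n → 1
  have hf : Tendsto (fun n : ℕ => ((m n : ℝ)) / (n : ℝ) ^ 2) atTop (nhds τ) := by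
    have h1 : Tendsto (fun n : ℕ => ((n : ℝ)) ^ 2) atTop atTop :=
      (tendsto_pow_atTop two_ne_zero).comp tendsto_natCast_atTop_atTop
    exact (tendsto_nat_floor_mul_div_atTop hτ0.le).comp h1
  have hcτ : c * τ = 2 * π * (k : ℝ) ^ 2 := by
    rw [hc_def, hτ]
    field_simp
    ring
  have hA : Tendsto (fun n : ℕ => u n ^ m n) atTop (nhds 1) := by
    have harg : Tendsto (fun n : ℕ => (-(Complex.I * (c : ℂ))) * (((m n : ℝ) / (n : ℝ) ^ 2 : ℝ) : ℂ))
        atTop (nhds ((-(Complex.I * (c : ℂ))) * (τ : ℂ))) :=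
      ((Complex.continuous_ofReal.tendsto τ).comp hf).const_mul _
    have hexp : Tendsto (fun n : ℕ =>
        Complex.exp ((-(Complex.I * (c : ℂ))) * (((m n : ℝ) / (n : ℝ) ^ 2 : ℝ) : ℂ)))
        atTop (nhds (Complex.exp ((-(Complex.I * (c : ℂ))) * (τ : ℂ)))) :=
      (Complex.continuous_exp.tendsto _).comp harg
    have hlim1 : Complex.exp ((-(Complex.I * (c : ℂ))) * (τ : ℂ)) = 1 := by
      have h2 : ((-(Complex.I * (c : ℂ))) * (τ : ℂ)) = ((-((k:ℤ) ^ 2) : ℤ) : ℂ) * (2 * π * Complex.I) := by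
        have : (c : ℂ) * (τ : ℂ) = 2 * (π : ℂ) * ((k : ℂ)) ^ 2 := by
          rw [← Complex.ofReal_mul, hcτ]; push_cast; ring
        push_cast
        rw [neg_mul, mul_assoc, this]
        ring
      rw [h2, Complex.exp_int_mul_two_pi_mul_I]
    have heq : ∀ n : ℕ, u n ^ m n =
        Complex.exp ((-(Complex.I * (c : ℂ))) * (((m n : ℝ) / (n : ℝ) ^ 2 : ℝ) : ℂ)) := by
      intro n
      rw [hu_def, ← Complex.exp_nat_mul]
      congr 1
      push_cast
      ring
    rw [← hlim1]
    exact hexp.congr (fun n => (heq n).symm)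
  -- Step B : z n ^ m n - u n ^ m n → 0
  obtain ⟨C, hC⟩ := hlam
  set E : ℝ := |C| + c ^ 2 with hE_def
  have hE0 : 0 ≤ E := by positivity
  set K : ℝ := τ * Real.exp (E * τ) * E with hK_def
  have hB : Tendsto (fun n : ℕ => z n ^ m n - u n ^ m n) atTop (nhds 0) := by
    have hg : Tendsto (fun n : ℕ => K / (n : ℝ)) atTop (nhds 0) :=
      tendsto_const_div_atTop_nhds_zero_nat K
    refine squeeze_zero_norm' ?_ hg
    · have h1 : ∀ᶠ n : ℕ in atTop, (1 : ℝ) ≤ (n : ℝ) :=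
        tendsto_natCast_atTop_atTop.eventually_ge_atTop 1
      have h2 : ∀ᶠ n : ℕ in atTop, c ≤ (n : ℝ) :=
        tendsto_natCast_atTop_atTop.eventually_ge_atTop c
      filter_upwards [hC, h1, h2] with n hCn hn1 hnc
      have hn0 : (0:ℝ) < (n:ℝ) := lt_of_lt_of_le one_pos hn1
      have hn2 : (0:ℝ) < (n:ℝ)^2 := by positivity
      have hn3 : (0:ℝ) < (n:ℝ)^3 := by positivity
      have hnn2 : (n:ℝ) ≤ (n:ℝ)^2 := by
        simpa using pow_le_pow_right₀ hn1 (by norm_num : 1 ≤ 2)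
      have hn34 : (n:ℝ)^3 ≤ (n:ℝ)^4 := pow_le_pow_right₀ hn1 (by norm_num)
      -- rewrite the hypothesis bound in terms of c
      have hzw : ‖z n - (1 - Complex.I * (((c / (n : ℝ) ^ 2) : ℝ) : ℂ))‖ ≤ C / (n:ℝ)^3 := by
        have : (π * k) ^ 2 * y / (2 * (n : ℝ) ^ 2) = c / (n : ℝ) ^ 2 := by
          rw [hc_def]; field_simp
        rw [← this]
        exact hCn
      -- norm of u n is 1
      have hu1 : ‖u n‖ = 1 := Complex.norm_exp_ofReal_mul_I _
      -- ‖u n - w n‖ ≤ c^2 / n^3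
      have habsx : ‖(((-(c / (n : ℝ) ^ 2) : ℝ) : ℂ) * Complex.I)‖ = c / (n:ℝ)^2 := by
        rw [norm_mul, Complex.norm_I, mul_one, Complex.norm_real, Real.norm_eq_abs, abs_neg]
        exact abs_of_nonneg (by positivity)
      have hxle1 : ‖(((-(c / (n : ℝ) ^ 2) : ℝ) : ℂ) * Complex.I)‖ ≤ 1 := by
        rw [habsx, div_le_one hn2]
        exact le_trans hnc hnn2
      have huw : ‖u n - (1 - Complex.I * (((c / (n : ℝ) ^ 2) : ℝ) : ℂ))‖ ≤ c^2 / (n:ℝ)^3 := by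
        have h := Complex.norm_exp_sub_one_sub_id_le hxle1
        rw [habsx] at h
        have heq2 : u n - (1 - Complex.I * (((c / (n : ℝ) ^ 2) : ℝ) : ℂ)) =
            Complex.exp (((-(c / (n : ℝ) ^ 2) : ℝ) : ℂ) * Complex.I) - 1 -
            (((-(c / (n : ℝ) ^ 2) : ℝ) : ℂ) * Complex.I) := by
          rw [hu_def]; push_cast; try ring
        rw [heq2]
        calc ‖_‖ ≤ (c / (n:ℝ)^2)^2 := h
          _ = c^2 / (n:ℝ)^4 := by ring
          _ ≤ c^2 / (n:ℝ)^3 := by gcongr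
      have hzu : ‖z n - u n‖ ≤ E / (n:ℝ)^3 := by
        have hd : z n - u n = (z n - (1 - Complex.I * (((c / (n : ℝ) ^ 2) : ℝ) : ℂ))) -
              (u n - (1 - Complex.I * (((c / (n : ℝ) ^ 2) : ℝ) : ℂ))) := by ring
        rw [hd]
        calc ‖(z n - (1 - Complex.I * (((c / (n : ℝ) ^ 2) : ℝ) : ℂ))) -
              (u n - (1 - Complex.I * (((c / (n : ℝ) ^ 2) : ℝ) : ℂ)))‖
            ≤ ‖z n - (1 - Complex.I * (((c / (n : ℝ) ^ 2) : ℝ) : ℂ))‖ +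
              ‖u n - (1 - Complex.I * (((c / (n : ℝ) ^ 2) : ℝ) : ℂ))‖ := norm_sub_le _ _
          _ ≤ C / (n:ℝ)^3 + c^2 / (n:ℝ)^3 := add_le_add hzw huw
          _ ≤ |C| / (n:ℝ)^3 + c^2 / (n:ℝ)^3 := by gcongr; exact le_abs_self C
          _ = E / (n:ℝ)^3 := by rw [hE_def]; ring
      set M : ℝ := 1 + E / (n:ℝ)^3 with hM_def
      have hM1 : 1 ≤ M := by
        have h3 : 0 ≤ E / (n:ℝ)^3 := div_nonneg hE0 hn3.le
        rw [hM_def]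
        linarith
      have hznM : ‖z n‖ ≤ M := by
        have hd2 : z n = u n + (z n - u n) := by ring
        rw [hd2]
        calc ‖u n + (z n - u n)‖
            ≤ ‖u n‖ + ‖z n - u n‖ := norm_add_le _ _
          _ ≤ 1 + E / (n:ℝ)^3 := by rw [hu1]; gcongr
      have hunM : ‖u n‖ ≤ M := by rw [hu1]; exact hM1
      have hkey := aux_pow_sub_pow (z n) (u n) M hM1 hznM hunM (m n)
      have hmle : (m n : ℝ) ≤ τ * (n:ℝ)^2 := by
        rw [hm_def]
        exact Nat.floor_le (by positivity)
      have hMm : M ^ (m n) ≤ Real.exp (E * τ) := by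
        calc M ^ (m n) ≤ (Real.exp (E / (n:ℝ)^3)) ^ (m n) := by
              apply pow_le_pow_left₀ (by positivity)
              rw [hM_def, add_comm]
              exact Real.add_one_le_exp _
          _ = Real.exp ((m n : ℝ) * (E / (n:ℝ)^3)) := (Real.exp_nat_mul _ _).symm
          _ ≤ Real.exp (E * τ) := by
              apply Real.exp_le_exp.mpr
              have hn23 : (n:ℝ)^2 ≤ (n:ℝ)^3 := pow_le_pow_right₀ hn1 (by norm_num)
              calc (m n : ℝ) * (E / (n:ℝ)^3) ≤ (τ * (n:ℝ)^2) * (E / (n:ℝ)^3) := by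
                    gcongr
                _ ≤ (τ * (n:ℝ)^3) * (E / (n:ℝ)^3) := by gcongr
                _ = E * τ * ((n:ℝ)^3 / (n:ℝ)^3) := by ring
                _ = E * τ := by rw [div_self hn3.ne']; ring
      calc ‖z n ^ m n - u n ^ m n‖ ≤ (m n) * M ^ (m n) * ‖z n - u n‖ := hkey
        _ ≤ (τ * (n:ℝ)^2) * Real.exp (E * τ) * (E / (n:ℝ)^3) := by
            gcongr
        _ = K / (n:ℝ) := by
            rw [hK_def]; field_simp
  have := hB.add hA
  rw [zero_add] at this
  exact this.congr (fun n => by simp; rfl)
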